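/- Let n ≥ 2, α > 1, q > 2̃_α, and suppose ψ is a model function with κ₁ r^α ≤ ψ(r) ≤ κ₂ r^α for r large, ψ(r) ∼ r near 0. If u is a global positive C² solution of -(ψ^{n-1}u')' = ψ^{n-1}u^q on (0,∞) with u'(0)=0, then there exists C > 0 such that u(r) ≤ C(r+1)^{-2/(q-1)} for all r ≥ 0. -/

import Mathlib

open Set Filter

set_option maxHeartbeats 2000000 in
/-- Decay estimate (Lemma 4.2, first half): for `q > 2̃_α` and `ψ` comparable to `r^α`
at infinity, every global positive radial solution satisfies
`u(r) ≤ C (r+1)^{-2/(q-1)}`. -/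
theorem solution_decay (n : ℕ) (hn : 2 ≤ n) (α : ℝ) (hα : 1 < α)
    (q : ℝ) (hq : (α * (n - 1) + 1) / (α * (n - 1) - 1) < q)
    (ψ : ℝ → ℝ)
    (hψcont : ContinuousOn ψ (Ici 0))
    (hψC1 : ContDiffOn ℝ 1 ψ (Ioi 0))
    (hψpos : ∀ r > (0:ℝ), 0 < ψ r)
    (hψ0 : Tendsto (fun r => ψ r / r) (nhdsWithin 0 (Ioi 0)) (nhds 1))
    (κ₁ κ₂ R : ℝ) (hκ₁ : 0 < κ₁) (hκ₂ : 0 < κ₂) (hR : 0 < R)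
    (hψinf : ∀ r ≥ R, κ₁ * r ^ α ≤ ψ r ∧ ψ r ≤ κ₂ * r ^ α)
    (u : ℝ → ℝ) (hu : ContDiff ℝ 2 u)
    (hupos : ∀ r : ℝ, 0 ≤ r → 0 < u r)
    (hu'0 : deriv u 0 = 0)
    (heq : ∀ r > (0:ℝ),
      -deriv (fun s => ψ s ^ (n - 1) * deriv u s) r = ψ r ^ (n - 1) * u r ^ q) :
    ∃ C > (0:ℝ), ∀ r ≥ (0:ℝ), u r ≤ C * (r + 1) ^ (-(2 / (q - 1))) := by
  -- basic exponent facts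
  set β : ℝ := α * (n - 1) with hβ
  have hn1 : (1:ℝ) ≤ (n:ℝ) - 1 := by
    have : (2:ℝ) ≤ n := by exact_mod_cast hn
    linarith
  have hβ1 : 1 < β := by
    have : (1:ℝ) * 1 ≤ α * ((n:ℝ) - 1) := by
      apply mul_le_mul (le_of_lt hα) hn1 (by norm_num) (by linarith)
    nlinarith
  have hq1 : 1 < q := by
    have h1 : (1:ℝ) < (β + 1) / (β - 1) := by
      rw [lt_div_iff₀ (by linarith)]; linarith
    linarith [hq]
  have hq0 : 0 < q - 1 := by linarith
  -- m = n - 1 as a natural number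
  set m : ℕ := n - 1 with hm
  have hmcast : ((m:ℝ)) = (n:ℝ) - 1 := by
    have : (1:ℕ) ≤ n := by omega
    push_cast [hm, Nat.cast_sub this]; ring
  have hm1 : 1 ≤ m := by omega
  -- ψ at 0 is 0
  have hψ00 : ψ 0 = 0 := by
    have h1 : Tendsto ψ (nhdsWithin 0 (Ioi 0)) (nhds 0) := by
      have : Tendsto (fun r : ℝ => ψ r / r * r) (nhdsWithin 0 (Ioi 0)) (nhds (1 * 0)) := by
        apply hψ0.mul
        exact tendsto_id.mono_left nhdsWithin_le_nhds
      simp only [one_mul] at this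
      apply this.congr'
      filter_upwards [self_mem_nhdsWithin] with r hr
      field_simp [ne_of_gt (mem_Ioi.mp hr)]
    have h2 : Tendsto ψ (nhdsWithin 0 (Ioi 0)) (nhds (ψ 0)) := by
      have := (hψcont 0 (self_mem_Ici)).tendsto
      exact this.mono_left (nhdsWithin_mono _ (fun x hx => mem_Ici.mpr (le_of_lt hx)))
    exact tendsto_nhds_unique h2 h1
  -- u is differentiable, deriv u continuous and differentiable
  have hud : Differentiable ℝ u := hu.differentiable (by norm_num)
  have hu' : ContDiff ℝ 1 (deriv u) := by
    have h2 : ContDiff ℝ ((1:ℕ) + 1) u := by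
      have : ((1:ℕ) + 1 : WithTop ℕ∞) = 2 := by norm_num
      rw [this]; exact hu
    exact (contDiff_succ_iff_deriv.mp h2).2.2
  have hu'd : Differentiable ℝ (deriv u) := hu'.differentiable one_ne_zero
  have hu'c : Continuous (deriv u) := hu'.continuous
  -- v = ψ^m * u'
  set v : ℝ → ℝ := fun s => ψ s ^ m * deriv u s with hv
  have hvdiff : ∀ r : ℝ, 0 < r → DifferentiableAt ℝ v r := by
    intro r hr
    have hψd : DifferentiableAt ℝ ψ r :=
      ((hψC1.differentiableOn one_ne_zero).differentiableAt (Ioi_mem_nhds hr))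
    exact (hψd.pow m).mul (hu'd r)
  have hvcont : ContinuousOn v (Ici 0) :=
    (hψcont.pow m).mul (hu'c.continuousOn)
  have hv0 : v 0 = 0 := by
    simp [hv, hψ00, zero_pow (by omega : m ≠ 0)]
  have hvderiv : ∀ r : ℝ, 0 < r → deriv v r = -(ψ r ^ m * u r ^ q) := by
    intro r hr
    have := heq r hr
    simp only [hm] at this ⊢
    linarith [this]
  -- v is nonpositive on [0, ∞)
  have hvanti : AntitoneOn v (Ici 0) := by
    apply antitoneOn_of_deriv_nonpos (convex_Ici 0) hvcont
    · intro x hx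
      rw [interior_Ici] at hx
      exact (hvdiff x hx).differentiableWithinAt
    · intro x hx
      rw [interior_Ici] at hx
      rw [hvderiv x hx]
      have h1 : 0 < ψ x ^ m := pow_pos (hψpos x hx) m
      have h2 : 0 < u x ^ q := Real.rpow_pos_of_pos (hupos x hx.le) q
      nlinarith
  have hvle : ∀ r : ℝ, 0 ≤ r → v r ≤ 0 := by
    intro r hr
    have := hvanti self_mem_Ici hr hr
    rwa [hv0] at this
  -- u' ≤ 0, u antitone
  have hu'le : ∀ r : ℝ, 0 < r → deriv u r ≤ 0 := by
    intro r hr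
    have h1 : 0 < ψ r ^ m := pow_pos (hψpos r hr) m
    have h2 := hvle r hr.le
    simp only [hv] at h2
    nlinarith
  have huanti : AntitoneOn u (Ici 0) := by
    apply antitoneOn_of_deriv_nonpos (convex_Ici 0) hud.continuous.continuousOn
    · exact fun x _ => (hud x).differentiableWithinAt
    · intro x hx; rw [interior_Ici] at hx; exact hu'le x hx
  -- radii
  set R1 : ℝ := max R 1 with hR1
  have hR1pos : (0:ℝ) < R1 := lt_of_lt_of_le one_pos (le_max_right _ _)
  have hR1ge1 : (1:ℝ) ≤ R1 := le_max_right _ _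
  have hR1geR : R ≤ R1 := le_max_left _ _
  have hucont : Continuous u := hud.continuous
  -- continuity of the RHS on positive half line
  have hrhs_cont : ContinuousOn (fun s => ψ s ^ m * u s ^ q) (Ici 0) := by
    apply (hψcont.pow m).mul
    exact hucont.continuousOn.rpow_const (fun x hx => Or.inl (hupos x hx).ne')
  -- FTC step : for R1 ≤ r, v r ≤ - ∫_{R1}^r ψ^m u^q
  have hftc : ∀ r : ℝ, R1 ≤ r →
      v r ≤ -∫ s in R1..r, ψ s ^ m * u s ^ q := by
    intro r hr
    have huIcc : uIcc R1 r = Icc R1 r := uIcc_of_le hr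
    have hsub : Icc R1 r ⊆ Ici (0:ℝ) := fun x hx => le_trans hR1pos.le hx.1
    have hInt : IntervalIntegrable (fun s => -(ψ s ^ m * u s ^ q)) MeasureTheory.volume R1 r := by
      apply ContinuousOn.intervalIntegrable
      rw [huIcc]
      exact (hrhs_cont.mono hsub).neg
    have hderivs : ∀ x ∈ uIcc R1 r, HasDerivAt v (-(ψ x ^ m * u x ^ q)) x := by
      intro x hx
      rw [huIcc] at hx
      have hx0 : 0 < x := lt_of_lt_of_le hR1pos hx.1
      have := (hvdiff x hx0).hasDerivAt
      rwa [hvderiv x hx0] at this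
    have heq2 := intervalIntegral.integral_eq_sub_of_hasDerivAt hderivs hInt
    rw [intervalIntegral.integral_neg] at heq2
    have hvR1 : v R1 ≤ 0 := hvle R1 hR1pos.le
    linarith
  -- lower bound for the integral
  have hIlow : ∀ r : ℝ, R1 ≤ r →
      κ₁ ^ m * u r ^ q * ((r ^ (β+1) - R1 ^ (β+1)) / (β+1)) ≤
        ∫ s in R1..r, ψ s ^ m * u s ^ q := by
    intro r hr
    have huIcc : uIcc R1 r = Icc R1 r := uIcc_of_le hr
    have hsub : Icc R1 r ⊆ Ici (0:ℝ) := fun x hx => le_trans hR1pos.le hx.1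
    have hurq : (0:ℝ) ≤ u r ^ q :=
      (Real.rpow_pos_of_pos (hupos r (le_trans hR1pos.le hr)) q).le
    have hpt : ∀ s ∈ Icc R1 r,
        (κ₁ ^ m * u r ^ q) * s ^ β ≤ ψ s ^ m * u s ^ q := by
      intro s hs
      have hs0 : 0 < s := lt_of_lt_of_le hR1pos hs.1
      have hsR : R ≤ s := le_trans hR1geR hs.1
      have hψs := (hψinf s hsR).1
      have h1 : (κ₁ * s ^ α) ^ m ≤ ψ s ^ m := by
        apply pow_le_pow_left₀ (by positivity) hψs
      have h2 : (κ₁ * s ^ α) ^ m = κ₁ ^ m * s ^ β := by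
        rw [mul_pow, ← Real.rpow_natCast (s ^ α) m, ← Real.rpow_mul hs0.le, hmcast, hβ]
      have h3 : u r ^ q ≤ u s ^ q := by
        apply Real.rpow_le_rpow (hupos r (le_trans hR1pos.le hr)).le
          (huanti (hsub hs) (le_trans hR1pos.le hr) hs.2) (by linarith)
      calc (κ₁ ^ m * u r ^ q) * s ^ β = (κ₁ ^ m * s ^ β) * u r ^ q := by ring
        _ ≤ ψ s ^ m * u s ^ q := by
            rw [← h2]
            apply mul_le_mul h1 h3 hurq (pow_pos (hψpos s hs0) m).le
    have hi1 : IntervalIntegrable (fun s => (κ₁ ^ m * u r ^ q) * s ^ β)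
        MeasureTheory.volume R1 r := by
      apply ContinuousOn.intervalIntegrable
      rw [huIcc]
      exact continuousOn_const.mul (fun x hx => ((Real.continuousAt_rpow_const x β
        (Or.inl (lt_of_lt_of_le hR1pos hx.1).ne')).continuousWithinAt))
    have hi2 : IntervalIntegrable (fun s => ψ s ^ m * u s ^ q)
        MeasureTheory.volume R1 r := by
      apply ContinuousOn.intervalIntegrable
      rw [huIcc]
      exact hrhs_cont.mono hsub
    have hmono := intervalIntegral.integral_mono_on hr hi1 hi2 hpt
    have hrpow : ∫ s in R1..r, (κ₁ ^ m * u r ^ q) * s ^ β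
        = (κ₁ ^ m * u r ^ q) * ((r ^ (β+1) - R1 ^ (β+1)) / (β+1)) := by
      rw [intervalIntegral.integral_const_mul, integral_rpow (Or.inl (by linarith : (-1:ℝ) < β))]
    rw [hrpow] at hmono
    linarith [hmono]
  -- key pointwise differential inequality
  set c0 : ℝ := κ₁ ^ m / (2 * (β + 1) * κ₂ ^ m) with hc0
  have hκ₂m : 0 < κ₂ ^ m := pow_pos hκ₂ m
  have hκ₁m : 0 < κ₁ ^ m := pow_pos hκ₁ m
  have hc0pos : 0 < c0 := by
    apply div_pos hκ₁m
    nlinarith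
  set R2 : ℝ := 2 * R1 with hR2
  have hkey : ∀ r : ℝ, R2 ≤ r → c0 * (u r ^ q * r) ≤ -deriv u r := by
    intro r hr
    have hrR1 : R1 ≤ r := by nlinarith
    have hr0 : 0 < r := lt_of_lt_of_le hR1pos hrR1
    have hrR : R ≤ r := le_trans hR1geR hrR1
    have hurq : (0:ℝ) < u r ^ q := Real.rpow_pos_of_pos (hupos r hr0.le) q
    have hrβ : 0 < r ^ β := Real.rpow_pos_of_pos hr0 β
    have h5 : r ^ (β+1) = r ^ β * r := by
      rw [Real.rpow_add hr0, Real.rpow_one]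
    -- combine FTC and integral estimate, clearing the denominator
    have h1' : κ₁ ^ m * u r ^ q * (r ^ (β+1) - R1 ^ (β+1)) ≤ (-v r) * (β+1) := by
      have ha := hftc r hrR1
      have hb := hIlow r hrR1
      have hc : κ₁ ^ m * u r ^ q * ((r ^ (β+1) - R1 ^ (β+1)) / (β+1)) ≤ -v r := by linarith
      rw [mul_div_assoc'] at hc
      rw [div_le_iff₀ (by linarith : (0:ℝ) < β + 1)] at hc
      exact hc
    -- r^(β+1) - R1^(β+1) ≥ r^(β+1)/2
    have h2 : r ^ (β+1) / 2 ≤ r ^ (β+1) - R1 ^ (β+1) := by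
      have ha : R1 ^ (β+1) ≤ (r/2) ^ (β+1) :=
        Real.rpow_le_rpow hR1pos.le (by linarith) (by linarith)
      have hb : (r/2) ^ (β+1) = r ^ (β+1) / 2 ^ (β+1) :=
        Real.div_rpow hr0.le (by norm_num : (0:ℝ) ≤ 2) (β+1)
      have hc : (2:ℝ) ≤ 2 ^ (β+1) := by
        calc (2:ℝ) = 2 ^ (1:ℝ) := (Real.rpow_one 2).symm
          _ ≤ 2 ^ (β+1) := Real.rpow_le_rpow_of_exponent_le one_le_two (by linarith)
      have hd : (0:ℝ) < r ^ (β+1) := Real.rpow_pos_of_pos hr0 _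
      have he : r ^ (β+1) / 2 ^ (β+1) ≤ r ^ (β+1) / 2 :=
        div_le_div_of_nonneg_left hd.le (by norm_num) hc
      linarith
    -- ψ r ^ m ≤ κ₂^m r^β
    have h3 : ψ r ^ m ≤ κ₂ ^ m * r ^ β := by
      have hb := (hψinf r hrR).2
      have h1a : ψ r ^ m ≤ (κ₂ * r ^ α) ^ m :=
        pow_le_pow_left₀ (hψpos r hr0).le hb m
      have h2a : (κ₂ * r ^ α) ^ m = κ₂ ^ m * r ^ β := by
        rw [mul_pow, ← Real.rpow_natCast (r ^ α) m, ← Real.rpow_mul hr0.le, hmcast, hβ]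
      linarith [h1a, h2a.le]
    have hu'r : 0 ≤ -deriv u r := by linarith [hu'le r hr0]
    have h4 : -v r ≤ κ₂ ^ m * r ^ β * (-deriv u r) := by
      have hc : ψ r ^ m * (-deriv u r) ≤ κ₂ ^ m * r ^ β * (-deriv u r) :=
        mul_le_mul_of_nonneg_right h3 hu'r
      show -(ψ r ^ m * deriv u r) ≤ _
      linarith
    rw [h5] at h1' h2
    rw [hc0, div_mul_eq_mul_div, div_le_iff₀ (by positivity)]
    have hfin : (κ₁ ^ m * (u r ^ q * r)) * r ^ β
        ≤ (-deriv u r * (2 * (β + 1) * κ₂ ^ m)) * r ^ β := by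
      have f1 : κ₁ ^ m * u r ^ q * (r ^ β * r / 2) ≤ κ₁ ^ m * u r ^ q * (r ^ β * r - R1 ^ (β+1)) :=
        mul_le_mul_of_nonneg_left h2 (by positivity)
      have f3 : (-v r) * (β+1) ≤ κ₂ ^ m * r ^ β * (-deriv u r) * (β+1) :=
        mul_le_mul_of_nonneg_right h4 (by linarith)
      nlinarith [f1, h1', f3]
    exact le_of_mul_le_mul_right hfin hrβ
  -- second integration: w = u^(1-q)
  set w : ℝ → ℝ := fun s => u s ^ (1 - q) with hwdef
  have hR2pos : 0 < R2 := by rw [hR2]; linarith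
  have hw' : ∀ s : ℝ, 0 ≤ s →
      HasDerivAt w (deriv u s * (1 - q) * u s ^ (1 - q - 1)) s := by
    intro s hs
    exact ((hud s).hasDerivAt).rpow_const (Or.inl (hupos s hs).ne')
  have hw'cont : ContinuousOn (fun s => deriv u s * (1 - q) * u s ^ (1 - q - 1)) (Ici 0) := by
    apply ContinuousOn.mul
    · exact (hu'c.continuousOn).mul continuousOn_const
    · exact hucont.continuousOn.rpow_const (fun x hx => Or.inl (hupos x hx).ne')
  -- pointwise lower bound on the derivative of w
  have hw'low : ∀ s : ℝ, R2 ≤ s →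
      (q - 1) * c0 * s ≤ deriv u s * (1 - q) * u s ^ (1 - q - 1) := by
    intro s hs
    have hs0 : 0 < s := lt_of_lt_of_le hR2pos hs
    have hk := hkey s hs
    have hup : (0:ℝ) < u s ^ (-q) := Real.rpow_pos_of_pos (hupos s hs0.le) _
    have huu : u s ^ q * u s ^ (-q) = 1 := by
      rw [← Real.rpow_add (hupos s hs0.le), add_neg_cancel, Real.rpow_zero]
    have hexp : 1 - q - 1 = -q := by ring
    rw [hexp]
    have e1 : c0 * (u s ^ q * s) * u s ^ (-q) ≤ (-deriv u s) * u s ^ (-q) :=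
      mul_le_mul_of_nonneg_right hk hup.le
    have e3 : c0 * s ≤ (-deriv u s) * u s ^ (-q) := by
      calc c0 * s = c0 * s * (u s ^ q * u s ^ (-q)) := by rw [huu, mul_one]
        _ = c0 * (u s ^ q * s) * u s ^ (-q) := by ring
        _ ≤ (-deriv u s) * u s ^ (-q) := e1
    have e4 := mul_le_mul_of_nonneg_left e3 hq0.le
    nlinarith [e4]
  -- integrate from R2 to r
  have hwlow : ∀ r : ℝ, R2 ≤ r →
      (q - 1) * c0 * ((r ^ 2 - R2 ^ 2) / 2) + w R2 ≤ w r := by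
    intro r hr
    have huIcc : uIcc R2 r = Icc R2 r := uIcc_of_le hr
    have hsub : Icc R2 r ⊆ Ici (0:ℝ) := fun x hx => le_trans hR2pos.le hx.1
    have hInt2 : IntervalIntegrable (fun s => deriv u s * (1 - q) * u s ^ (1 - q - 1))
        MeasureTheory.volume R2 r := by
      apply ContinuousOn.intervalIntegrable
      rw [huIcc]; exact hw'cont.mono hsub
    have hInt1 : IntervalIntegrable (fun s => (q - 1) * c0 * s)
        MeasureTheory.volume R2 r :=
      ((continuous_const.mul continuous_id)).intervalIntegrable _ _
    have hftc2 : ∫ s in R2..r, deriv u s * (1 - q) * u s ^ (1 - q - 1) = w r - w R2 := by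
      apply intervalIntegral.integral_eq_sub_of_hasDerivAt _ hInt2
      intro x hx
      rw [huIcc] at hx
      exact hw' x (le_trans hR2pos.le hx.1)
    have hmono : ∫ s in R2..r, (q - 1) * c0 * s ≤
        ∫ s in R2..r, deriv u s * (1 - q) * u s ^ (1 - q - 1) := by
      apply intervalIntegral.integral_mono_on hr hInt1 hInt2
      exact fun x hx => hw'low x hx.1
    have hval : ∫ s in R2..r, (q - 1) * c0 * s = (q - 1) * c0 * ((r ^ 2 - R2 ^ 2) / 2) := by
      rw [intervalIntegral.integral_const_mul, integral_id]
    rw [hval, hftc2] at hmono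
    linarith
  -- conclusion for large r
  set R3 : ℝ := 2 * R2 with hR3
  set c1 : ℝ := (q - 1) * c0 / 4 with hc1
  have hc1pos : 0 < c1 := by rw [hc1]; positivity
  have hwR2pos : 0 < w R2 := Real.rpow_pos_of_pos (hupos R2 hR2pos.le) _
  have hwbig : ∀ r : ℝ, R3 ≤ r → c1 * r ^ 2 ≤ w r := by
    intro r hr
    have hrR2 : R2 ≤ r := by rw [hR3] at hr; nlinarith
    have h1 := hwlow r hrR2
    have h2 : R2 ^ 2 ≤ r ^ 2 / 4 := by nlinarith [hR2pos]
    rw [hc1]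
    nlinarith [h1, h2, hwR2pos]
  set z : ℝ := -(1 / (q - 1)) with hz
  set p : ℝ := 2 / (q - 1) with hp
  have hppos : 0 < p := by rw [hp]; positivity
  have hzneg : z ≤ 0 := by rw [hz, neg_nonpos]; positivity
  have hueq : ∀ r : ℝ, 0 ≤ r → u r = w r ^ z := by
    intro r hr
    have : w r ^ z = u r ^ ((1 - q) * z) := (Real.rpow_mul (hupos r hr).le _ _).symm
    rw [this]
    have : (1 - q) * z = 1 := by rw [hz]; field_simp; ring
    rw [this, Real.rpow_one]
  have hbig : ∀ r : ℝ, R3 ≤ r → u r ≤ (c1 ^ z * 2 ^ p) * (r + 1) ^ (-p) := by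
    intro r hr
    have hR3ge : (4:ℝ) ≤ R3 := by rw [hR3, hR2]; linarith
    have hr1 : (1:ℝ) ≤ r := by linarith
    have hr0 : (0:ℝ) < r := by linarith
    have h1 : u r ≤ (c1 * r ^ 2) ^ z := by
      rw [hueq r hr0.le]
      exact Real.rpow_le_rpow_of_nonpos (by positivity) (hwbig r hr) hzneg
    have h2 : (c1 * r ^ 2) ^ z = c1 ^ z * r ^ (2 * z) := by
      rw [Real.mul_rpow hc1pos.le (by positivity)]
      congr 1
      rw [← Real.rpow_natCast r 2, ← Real.rpow_mul hr0.le]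
      norm_num
    have h3 : 2 * z = -p := by rw [hz, hp]; ring
    have h4 : r ^ (-p) ≤ 2 ^ p * (r + 1) ^ (-p) := by
      have ha : (2 * r) ^ (-p) ≤ (r + 1) ^ (-p) :=
        Real.rpow_le_rpow_of_nonpos (by linarith) (by linarith) (by linarith)
      have hb : (2 * r) ^ (-p) = 2 ^ (-p) * r ^ (-p) :=
        Real.mul_rpow (by norm_num) hr0.le
      have hc : (2:ℝ) ^ p * 2 ^ (-p) = 1 := by
        rw [← Real.rpow_add two_pos, add_neg_cancel, Real.rpow_zero]
      have hd := mul_le_mul_of_nonneg_left (hb ▸ ha) (Real.rpow_pos_of_pos two_pos p).le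
      calc r ^ (-p) = 2 ^ p * (2 ^ (-p) * r ^ (-p)) := by
            rw [← mul_assoc, hc, one_mul]
        _ ≤ 2 ^ p * (r + 1) ^ (-p) := hd
    calc u r ≤ c1 ^ z * r ^ (-p) := by rw [← h3]; rw [h2] at h1; exact h1
      _ ≤ c1 ^ z * (2 ^ p * (r + 1) ^ (-p)) :=
          mul_le_mul_of_nonneg_left h4 (Real.rpow_pos_of_pos hc1pos z).le
      _ = (c1 ^ z * 2 ^ p) * (r + 1) ^ (-p) := by ring
  -- conclusion for small r
  have hR3pos : 0 < R3 := by rw [hR3]; linarith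
  have hsmall : ∀ r : ℝ, 0 ≤ r → r ≤ R3 →
      u r ≤ (u 0 * (R3 + 1) ^ p) * (r + 1) ^ (-p) := by
    intro r hr0 hrR3
    have h1 : u r ≤ u 0 := huanti self_mem_Ici hr0 hr0
    have h2 : (R3 + 1) ^ (-p) ≤ (r + 1) ^ (-p) :=
      Real.rpow_le_rpow_of_nonpos (by linarith) (by linarith) (by linarith)
    have h3 : (R3 + 1) ^ p * (R3 + 1) ^ (-p) = 1 := by
      rw [← Real.rpow_add (by linarith), add_neg_cancel, Real.rpow_zero]
    have hu0 : 0 < u 0 := hupos 0 le_rfl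
    calc u r ≤ u 0 := h1
      _ = u 0 * ((R3 + 1) ^ p * (R3 + 1) ^ (-p)) := by rw [h3, mul_one]
      _ ≤ u 0 * ((R3 + 1) ^ p * (r + 1) ^ (-p)) := by
          apply mul_le_mul_of_nonneg_left _ hu0.le
          exact mul_le_mul_of_nonneg_left h2 (Real.rpow_pos_of_pos (by linarith) p).le
      _ = (u 0 * (R3 + 1) ^ p) * (r + 1) ^ (-p) := by ring
  -- assemble
  refine ⟨max (u 0 * (R3 + 1) ^ p) (c1 ^ z * 2 ^ p), ?_, ?_⟩
  · apply lt_max_of_lt_left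
    exact mul_pos (hupos 0 le_rfl) (Real.rpow_pos_of_pos (by linarith) p)
  · intro r hr
    have hnn : (0:ℝ) ≤ (r + 1) ^ (-(2 / (q - 1))) := Real.rpow_nonneg (by linarith) _
    have hpeq : -(2 / (q - 1)) = -p := by rw [hp]
    rcases le_or_gt r R3 with hcase | hcase
    · calc u r ≤ (u 0 * (R3 + 1) ^ p) * (r + 1) ^ (-p) := hsmall r hr hcase
        _ ≤ max (u 0 * (R3 + 1) ^ p) (c1 ^ z * 2 ^ p) * (r + 1) ^ (-(2 / (q - 1))) := by
            rw [hpeq]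
            exact mul_le_mul_of_nonneg_right (le_max_left _ _) (hpeq ▸ hnn)
    · calc u r ≤ (c1 ^ z * 2 ^ p) * (r + 1) ^ (-p) := hbig r hcase.le
        _ ≤ max (u 0 * (R3 + 1) ^ p) (c1 ^ z * 2 ^ p) * (r + 1) ^ (-(2 / (q - 1))) := by
            rw [hpeq]
            exact mul_le_mul_of_nonneg_right (le_max_right _ _) (hpeq ▸ hnn)
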